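/- In the Paley graph P(q) with q ≡ 1 (mod 4) a prime power, any two non-adjacent distinct vertices have exactly (q−1)/4 common neighbours. -/

import Mathlib

open SimpleGraph

/-- The Paley graph on a finite field `F`: vertices are field elements, and `u ~ v`
iff `u ≠ v` and `u - v` is a (nonzero) square. -/
def paleyGraph (F : Type*) [Field F] : SimpleGraph F :=
  SimpleGraph.fromRel (fun u v => IsSquare (u - v))

section Aux

variable {F : Type*} [Field F] [Fintype F] [DecidableEq F]

lemma isSquare_neg_iff_aux (hm1 : IsSquare (-1 : F)) (y : F) :
    IsSquare (-y) ↔ IsSquare y := by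
  constructor
  · rintro ⟨s, hs⟩
    obtain ⟨i, hi⟩ := hm1
    exact ⟨i * s, by linear_combination -hs + (s * s) * hi⟩
  · rintro ⟨s, hs⟩
    obtain ⟨i, hi⟩ := hm1
    exact ⟨i * s, by linear_combination -hs + (s * s) * hi⟩

/-- The key character sum: `∑ x, χ(x) χ(x - a) = -1` for `a ≠ 0`. -/
lemma sum_quadChar_mul_aux (hF : ringChar F ≠ 2) {a : F} (ha : a ≠ 0) :
    ∑ x : F, quadraticChar F x * quadraticChar F (x - a) = -1 := by
  classical
  rw [← Finset.sum_erase_add _ _ (Finset.mem_univ (0 : F))]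
  rw [quadraticChar_zero, zero_mul, add_zero]
  have key : ∀ x ∈ Finset.univ.erase (0 : F),
      quadraticChar F x * quadraticChar F (x - a) = quadraticChar F (1 - a * x⁻¹) := by
    intro x hx
    have hx0 : x ≠ 0 := Finset.ne_of_mem_erase hx
    have : (1 - a * x⁻¹) = x⁻¹ * (x - a) := by field_simp
    have hne0 : quadraticChar F x ≠ 0 := fun h => hx0 (quadraticChar_eq_zero_iff.mp h)
    have hinv : quadraticChar F x⁻¹ = quadraticChar F x := by
      apply mul_left_cancel₀ hne0
      rw [← map_mul, mul_inv_cancel₀ hx0, map_one, ← pow_two, quadraticChar_sq_one hx0]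
    rw [this, map_mul, hinv]
  rw [Finset.sum_congr rfl key]
  have hbij : ∑ x ∈ Finset.univ.erase (0 : F), quadraticChar F (1 - a * x⁻¹)
      = ∑ y ∈ Finset.univ.erase (1 : F), quadraticChar F y := by
    apply Finset.sum_nbij' (fun x => 1 - a * x⁻¹) (fun y => a * (1 - y)⁻¹)
    · intro x hx
      have hx0 : x ≠ 0 := Finset.ne_of_mem_erase hx
      simp only [Finset.mem_erase, Finset.mem_univ, and_true]
      intro h
      have : a * x⁻¹ = 0 := by linear_combination -h
      rcases mul_eq_zero.mp this with h' | h'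
      · exact ha h'
      · exact hx0 (inv_eq_zero.mp h')
    · intro y hy
      have hy1 : y ≠ 1 := Finset.ne_of_mem_erase hy
      simp only [Finset.mem_erase, Finset.mem_univ, and_true]
      intro h
      rcases mul_eq_zero.mp h with h' | h'
      · exact ha h'
      · exact hy1 (by have := inv_eq_zero.mp h'; linear_combination -this)
    · intro x hx
      have hx0 : x ≠ 0 := Finset.ne_of_mem_erase hx
      have h1 : (1 : F) - (1 - a * x⁻¹) = a * x⁻¹ := by ring
      rw [h1, mul_inv, inv_inv, ← mul_assoc, mul_inv_cancel₀ ha, one_mul]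
    · intro y hy
      have hy1 : y ≠ 1 := Finset.ne_of_mem_erase hy
      have h1 : (1 : F) - y ≠ 0 := sub_ne_zero.mpr (Ne.symm hy1)
      field_simp
      ring
    · intros; rfl
  rw [hbij]
  have h0 := quadraticChar_sum_zero hF
  rw [← Finset.sum_erase_add _ _ (Finset.mem_univ (1 : F)), map_one] at h0
  linarith

end Aux

/-- In the Paley graph `P(q)` with `q ≡ 1 (mod 4)` a prime power, any two non-adjacent distinct
vertices have exactly `(q - 1)/4` common neighbours. -/
theorem stmt7 {F : Type*} [Field F] [Fintype F] (q : ℕ) (hq : Fintype.card F = q)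
    (hq1 : q % 4 = 1) (u v : F) (hne : u ≠ v) (huv : ¬ (paleyGraph F).Adj u v) :
    ((paleyGraph F).neighborSet u ∩ (paleyGraph F).neighborSet v).ncard = (q - 1) / 4 := by
  classical
  set χ := quadraticChar F with hχ
  -- basic facts
  have hF2 : ringChar F ≠ 2 := by
    intro h
    have := FiniteField.even_card_of_char_two (F := F) h
    omega
  have hm1 : IsSquare (-1 : F) := by
    rw [FiniteField.isSquare_neg_one_iff, hq]; omega
  set a : F := u - v with had
  have ha0 : a ≠ 0 := sub_ne_zero.mpr hne
  have hans : ¬ IsSquare a := by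
    intro hs
    exact huv (by
      rw [paleyGraph, SimpleGraph.fromRel_adj]
      exact ⟨hne, Or.inl hs⟩)
  have hansn : ¬ IsSquare (-a) := fun h => hans ((isSquare_neg_iff_aux hm1 a).mp h)
  -- the counting finset
  set T : Finset F := Finset.univ.filter (fun x => IsSquare x ∧ IsSquare (x - a)) with hT
  -- character values
  have hchia : χ a = -1 := quadraticChar_neg_one_iff_not_isSquare.mpr hans
  have hchina : χ (-a) = -1 := quadraticChar_neg_one_iff_not_isSquare.mpr hansn
  -- pointwise identity
  have hpt : ∀ x : F, (1 + χ x) * (1 + χ (x - a))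
      = if IsSquare x ∧ IsSquare (x - a) then 4 else 0 := by
    intro x
    by_cases hx0 : x = 0
    · subst hx0
      rw [if_neg (by simpa using hansn)]
      rw [zero_sub, hchina]; simp
    · by_cases hxa : x = a
      · subst hxa
        rw [if_neg (by tauto)]
        rw [hchia]; simp
      · have hxa0 : x - a ≠ 0 := sub_ne_zero.mpr hxa
        by_cases h1 : IsSquare x
        · have e1 : χ x = 1 := (quadraticChar_one_iff_isSquare hx0).mpr h1
          by_cases h2 : IsSquare (x - a)
          · have e2 : χ (x - a) = 1 := (quadraticChar_one_iff_isSquare hxa0).mpr h2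
            rw [if_pos ⟨h1, h2⟩, e1, e2]; norm_num
          · have e2 : χ (x - a) = -1 := quadraticChar_neg_one_iff_not_isSquare.mpr h2
            rw [if_neg (by tauto), e1, e2]; norm_num
        · have e1 : χ x = -1 := quadraticChar_neg_one_iff_not_isSquare.mpr h1
          rw [if_neg (by tauto), e1]; norm_num
  -- sum computation
  have hsum1 : ∑ x : F, (1 + χ x) * (1 + χ (x - a)) = (4 : ℤ) * T.card := by
    rw [Finset.sum_congr rfl (fun x _ => hpt x)]
    rw [Finset.sum_ite, Finset.sum_const, Finset.sum_const_zero, add_zero, nsmul_eq_mul, hT]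
    simp [Finset.filter_congr_decidable, mul_comm]
  have hshift : ∑ x : F, χ (x - a) = 0 := by
    rw [Fintype.sum_bijective (fun x : F => x - a)
      (Equiv.subRight a).bijective _ (fun y => χ y) (fun x => rfl)]
    exact quadraticChar_sum_zero hF2
  have hsum2 : ∑ x : F, (1 + χ x) * (1 + χ (x - a)) = (q : ℤ) - 1 := by
    have expand : ∀ x : F, (1 + χ x) * (1 + χ (x - a))
        = 1 + χ x + χ (x - a) + χ x * χ (x - a) := by intro x; ring
    rw [Finset.sum_congr rfl (fun x _ => expand x)]
    rw [Finset.sum_add_distrib, Finset.sum_add_distrib, Finset.sum_add_distrib]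
    rw [quadraticChar_sum_zero hF2, hshift, sum_quadChar_mul_aux hF2 ha0]
    simp only [Finset.sum_const, Finset.card_univ, hq, nsmul_eq_mul, mul_one]
    ring
  have hq1' : 1 ≤ q := by omega
  have hcardT : 4 * T.card = q - 1 := by
    have : (4 : ℤ) * T.card = (q : ℤ) - 1 := by rw [← hsum1, hsum2]
    have h' : (4 * T.card : ℤ) = ((q - 1 : ℕ) : ℤ) := by push_cast [hq1']; linarith
    exact_mod_cast h'
  -- relate the neighbor sets to T
  have hset : (paleyGraph F).neighborSet u ∩ (paleyGraph F).neighborSet v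
      = (fun y => y + v) '' (T : Set F) := by
    ext x
    simp only [Set.mem_inter_iff, SimpleGraph.mem_neighborSet, Set.mem_image,
      Finset.coe_filter, Set.mem_setOf_eq, Finset.mem_univ, true_and, hT]
    constructor
    · rintro ⟨h1, h2⟩
      rw [paleyGraph, SimpleGraph.fromRel_adj] at h1 h2
      obtain ⟨hu, h1⟩ := h1
      obtain ⟨hv, h2⟩ := h2
      have hsq1 : IsSquare (x - u) := by
        rcases h1 with h | h
        · exact (isSquare_neg_iff_aux hm1 (x - u)).mp (by rw [neg_sub]; exact h)
        · exact h
      have hsq2 : IsSquare (x - v) := by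
        rcases h2 with h | h
        · exact (isSquare_neg_iff_aux hm1 (x - v)).mp (by rw [neg_sub]; exact h)
        · exact h
      refine ⟨x - v, ⟨hsq2, ?_⟩, by ring⟩
      have hxx : x - v - a = x - u := by rw [had]; ring
      rw [hxx]; exact hsq1
    · rintro ⟨y, ⟨hs1, hs2⟩, rfl⟩
      have hxv : y + v - v = y := by ring
      have hxu : y + v - u = y - a := by rw [had]; ring
      have hy0 : y ≠ 0 := by
        rintro rfl
        exact hansn (by simpa using hs2)
      have hya : y ≠ a := by
        rintro rfl
        exact hans hs1
      constructor
      · rw [paleyGraph, SimpleGraph.fromRel_adj]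
        refine ⟨fun h => hya (by rw [had]; linear_combination -h), Or.inr (by rw [hxu]; exact hs2)⟩
      · rw [paleyGraph, SimpleGraph.fromRel_adj]
        refine ⟨fun h => hy0 (by linear_combination -h), Or.inr (by rw [hxv]; exact hs1)⟩
  rw [hset, Set.ncard_image_of_injective _ (add_left_injective v), Set.ncard_coe_finset]
  omega
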